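/- Reduction to Boolean form: for every DL-PA∥ formula φ there exists a formula ψ that is a Boolean combination (built with ¬, ∨, ⊤) of formulas of the three forms p, ⟨+p⟩⊤, and ⟨p?ⁿ⟩⊤ ∨ ⟨¬p?ⁿ⟩⊤ (for p ∈ ℙ), such that the formula φ ↔ ψ is valid, i.e. φ and ψ are true in exactly the same models. -/

import Mathlib

set_option maxHeartbeats 1000000

/-- Propositional variables. -/
abbrev PVar := ℕ

/-- A DL-PA∥ model: readable variables `R`, writable variables `W`,
valuation `V`, with writability implying readability. -/
@[ext]
structure Model where
  R : Set PVar
  W : Set PVar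
  V : Set PVar
  sub : W ⊆ R

mutual
/-- Formulas of DL-PA∥. -/
inductive Formula : Type where
  | atom : PVar → Formula
  | top  : Formula
  | neg  : Formula → Formula
  | or   : Formula → Formula → Formula
  | dia  : Program → Formula → Formula
/-- Programs of DL-PA∥. -/
inductive Program : Type where
  | assignT : PVar → Program   -- +p
  | assignF : PVar → Program   -- −p
  | addR : PVar → Program      -- +r p
  | remR : PVar → Program      -- −r p
  | addW : PVar → Program      -- +w p
  | remW : PVar → Program      -- −w p
  | testEx : Formula → Program -- exogenous test φ?
  | testEn : Formula → Program -- endogenous test φ?ⁿ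
  | seq : Program → Program → Program
  | choice : Program → Program → Program
  | star : Program → Program
  | par : Program → Program → Program
end

/-- RW-disjointness. -/
def RWdisjoint (M1 M2 : Model) : Prop :=
  M1.W ∩ M2.R = ∅ ∧ M2.W ∩ M1.R = ∅

/-- Split relation `M ◁ (M₁,M₂)`. -/
def SplitRel (M M1 M2 : Model) : Prop :=
  RWdisjoint M1 M2 ∧ M.R = M1.R ∪ M2.R ∧ M.W = M1.W ∪ M2.W ∧ M.V = M1.V ∧ M.V = M2.V

/-- Merge relation `M ▷ (M₁,M₂)`. -/
def MergeRel (M M1 M2 : Model) : Prop :=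
  RWdisjoint M1 M2 ∧ M.R = M1.R ∪ M2.R ∧ M.W = M1.W ∪ M2.W ∧
  M1.V \ M.W = M2.V \ M.W ∧ M.V = (M1.V ∩ M1.W) ∪ (M2.V ∩ M2.W) ∪ (M1.V ∩ M2.V)

/-- Indistinguishability `M ∼ M'`. -/
def Indist (M M' : Model) : Prop :=
  M.R = M'.R ∧ M.W = M'.W ∧ M.V ∩ M.R = M'.V ∩ M'.R

mutual
/-- Truth of a formula in a model. -/
def Sat : Model → Formula → Prop
  | M, .atom p => p ∈ M.V
  | _, .top => True
  | M, .neg φ => ¬ Sat M φ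
  | M, .or φ ψ => Sat M φ ∨ Sat M ψ
  | M, .dia π φ => ∃ M', Interp π M M' ∧ Sat M' φ
/-- Interpretation of programs as relations between models. -/
def Interp : Program → Model → Model → Prop
  | .assignT p, M, M' => M'.R = M.R ∧ M'.W = M.W ∧ M'.V = M.V ∪ {p} ∧ p ∈ M.W
  | .assignF p, M, M' => M'.R = M.R ∧ M'.W = M.W ∧ M'.V = M.V \ {p} ∧ p ∈ M.W
  | .addR p, M, M' => M'.R = M.R ∪ {p} ∧ M'.W = M.W ∧ M'.V = M.V
  | .remR p, M, M' => M'.R = M.R \ {p} ∧ M'.W = M.W \ {p} ∧ M'.V = M.V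
  | .addW p, M, M' => M'.R = M.R ∪ {p} ∧ M'.W = M.W ∪ {p} ∧ M'.V = M.V
  | .remW p, M, M' => M'.R = M.R ∧ M'.W = M.W \ {p} ∧ M'.V = M.V
  | .testEx φ, M, M' => M = M' ∧ Sat M φ
  | .testEn φ, M, M' => M = M' ∧ ∀ M'', Indist M'' M → Sat M'' φ
  | .seq π1 π2, M, M' => ∃ M'', Interp π1 M M'' ∧ Interp π2 M'' M'
  | .choice π1 π2, M, M' => Interp π1 M M' ∨ Interp π2 M M'
  | .star π, M, M' => Relation.ReflTransGen (fun A B => Interp π A B) M M'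
  | .par π1 π2, M, M' => ∃ M1 M2 M1' M2',
      SplitRel M M1 M2 ∧ MergeRel M' M1' M2' ∧
      Interp π1 M1 M1' ∧ Interp π2 M2 M2' ∧
      M1.R = M1'.R ∧ M1.W = M1'.W ∧ M1.V \ M1.W = M1'.V \ M1'.W ∧
      M2.R = M2'.R ∧ M2.W = M2'.W ∧ M2.V \ M2.W = M2'.V \ M2'.W
end

mutual
/-- Propositional variables occurring in a formula. -/
def varsF : Formula → Finset PVar
  | .atom p => {p}
  | .top => ∅
  | .neg φ => varsF φ
  | .or φ ψ => varsF φ ∪ varsF ψ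
  | .dia π φ => varsP π ∪ varsF φ
/-- Propositional variables occurring in a program. -/
def varsP : Program → Finset PVar
  | .assignT p => {p}
  | .assignF p => {p}
  | .addR p => {p}
  | .remR p => {p}
  | .addW p => {p}
  | .remW p => {p}
  | .testEx φ => varsF φ
  | .testEn φ => varsF φ
  | .seq π1 π2 => varsP π1 ∪ varsP π2
  | .choice π1 π2 => varsP π1 ∪ varsP π2
  | .star π => varsP π
  | .par π1 π2 => varsP π1 ∪ varsP π2
end

/-- `⊥`. -/
def botF : Formula := .neg .top
/-- Conjunction. -/
def andF (φ ψ : Formula) : Formula := .neg (.or (.neg φ) (.neg ψ))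
/-- Implication. -/
def impF (φ ψ : Formula) : Formula := .or (.neg φ) ψ
/-- Bi-implication. -/
def iffF (φ ψ : Formula) : Formula := andF (impF φ ψ) (impF ψ φ)
/-- `[π]φ`. -/
def boxF (π : Program) (φ : Formula) : Formula := .neg (.dia π (.neg φ))
/-- `w(p)`: `p` is writable. -/
def wF (p : PVar) : Formula := .dia (.assignT p) .top
/-- `r(p)`: `p` is readable. -/
def rF (p : PVar) : Formula :=
  .or (.dia (.testEn (.atom p)) .top) (.dia (.testEn (.neg (.atom p))) .top)

/-- Restriction `M ∩ P` of a model to a set of variables. -/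
def interModel (M : Model) (P : Set PVar) : Model :=
  ⟨M.R ∩ P, M.W ∩ P, M.V ∩ P, Set.inter_subset_inter M.sub (subset_refl P)⟩

/-- A formula is valid iff true in every model. -/
def Valid (φ : Formula) : Prop := ∀ M : Model, Sat M φ

/-- Boolean combinations (built with ¬, ∨, ⊤) of formulas of the three forms
`p`, `⟨+p⟩⊤` and `⟨p?ⁿ⟩⊤ ∨ ⟨¬p?ⁿ⟩⊤`. -/
inductive IsBool : Formula → Prop where
  | atom : ∀ p : PVar, IsBool (.atom p)
  | writable : ∀ p : PVar, IsBool (.dia (.assignT p) .top)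
  | readable : ∀ p : PVar,
      IsBool (.or (.dia (.testEn (.atom p)) .top)
                  (.dia (.testEn (.neg (.atom p))) .top))
  | top : IsBool .top
  | neg : ∀ φ, IsBool φ → IsBool (.neg φ)
  | or : ∀ φ ψ, IsBool φ → IsBool ψ → IsBool (.or φ ψ)

/-! ### Locality infrastructure -/

def Agree (P : Set PVar) (M N : Model) : Prop :=
  ∀ x ∈ P, (x ∈ M.R ↔ x ∈ N.R) ∧ (x ∈ M.W ↔ x ∈ N.W) ∧ (x ∈ M.V ↔ x ∈ N.V)

theorem Agree.symm {P : Set PVar} {M N : Model} (h : Agree P M N) : Agree P N M := by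
  intro x hx; have := h x hx; tauto

/-- paste: take `M` on `P` and `N` outside `P`. -/
def pasteS (A B P : Set PVar) : Set PVar := (A ∩ P) ∪ (B \ P)

theorem mem_pasteS {A B P : Set PVar} {x : PVar} :
    x ∈ pasteS A B P ↔ ((x ∈ P ∧ x ∈ A) ∨ (x ∉ P ∧ x ∈ B)) := by
  simp [pasteS, Set.mem_union, Set.mem_inter_iff, Set.mem_diff]; tauto

def paste (M N : Model) (P : Set PVar) : Model :=
  ⟨pasteS M.R N.R P, pasteS M.W N.W P, pasteS M.V N.V P, by
    intro x hx
    rw [mem_pasteS] at hx ⊢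
    rcases hx with ⟨h1, h2⟩ | ⟨h1, h2⟩
    · exact Or.inl ⟨h1, M.sub h2⟩
    · exact Or.inr ⟨h1, N.sub h2⟩⟩

theorem paste_R {M N : Model} {P : Set PVar} {x : PVar} :
    x ∈ (paste M N P).R ↔ ((x ∈ P ∧ x ∈ M.R) ∨ (x ∉ P ∧ x ∈ N.R)) := mem_pasteS
theorem paste_W {M N : Model} {P : Set PVar} {x : PVar} :
    x ∈ (paste M N P).W ↔ ((x ∈ P ∧ x ∈ M.W) ∨ (x ∉ P ∧ x ∈ N.W)) := mem_pasteS
theorem paste_V {M N : Model} {P : Set PVar} {x : PVar} :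
    x ∈ (paste M N P).V ↔ ((x ∈ P ∧ x ∈ M.V) ∨ (x ∉ P ∧ x ∈ N.V)) := mem_pasteS

theorem agree_paste {P : Set PVar} (M N : Model) : Agree P M (paste M N P) := by
  intro x hx
  simp [paste_R, paste_W, paste_V, hx]

theorem paste_self {P : Set PVar} {M N : Model} (h : Agree P M N) : paste M N P = N := by
  ext x <;>
  · simp only [paste_R, paste_W, paste_V]
    by_cases hx : x ∈ P
    · have := h x hx; tauto
    · tauto

theorem paste_paste {P : Set PVar} (M N K : Model) :
    paste M (paste N K P) P = paste M K P := by
  ext x <;>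
  · simp only [paste_R, paste_W, paste_V]
    by_cases hx : x ∈ P <;> tauto

theorem Agree.mono {P Q : Set PVar} {M N : Model} (h : Agree P M N) (hQ : Q ⊆ P) :
    Agree Q M N := fun x hx => h x (hQ hx)

set_option maxHeartbeats 10000000 in
mutual

theorem satAgree (φ : Formula) (P : Set PVar) (hP : ↑(varsF φ) ⊆ P)
    (M N : Model) (h : Agree P M N) : Sat M φ ↔ Sat N φ := by
  match φ with
  | .atom p =>
    have hp : p ∈ P := hP (by simp [varsF])
    simpa [Sat] using (h p hp).2.2
  | .top => simp [Sat]
  | .neg φ =>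
    have hP' : ↑(varsF φ) ⊆ P := by simpa [varsF] using hP
    simp only [Sat]
    exact not_congr (satAgree φ P hP' M N h)
  | .or φ ψ =>
    have h1 : ↑(varsF φ) ⊆ P := by
      refine subset_trans ?_ hP; simp [varsF, Finset.coe_union]
    have h2 : ↑(varsF ψ) ⊆ P := by
      refine subset_trans ?_ hP; simp [varsF, Finset.coe_union]
    simp only [Sat]
    exact or_congr (satAgree φ P h1 M N h) (satAgree ψ P h2 M N h)
  | .dia π φ =>
    have h1 : ↑(varsP π) ⊆ P := by
      refine subset_trans ?_ hP; simp [varsF, Finset.coe_union]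
    have h2 : ↑(varsF φ) ⊆ P := by
      refine subset_trans ?_ hP; simp [varsF, Finset.coe_union]
    simp only [Sat]
    constructor
    · rintro ⟨M', hI, hS⟩
      exact ⟨paste M' N P, interpAgree π P h1 hI N h,
        (satAgree φ P h2 M' (paste M' N P) (agree_paste M' N)).mp hS⟩
    · rintro ⟨N', hI, hS⟩
      exact ⟨paste N' M P, interpAgree π P h1 hI M h.symm,
        (satAgree φ P h2 N' (paste N' M P) (agree_paste N' M)).mp hS⟩
termination_by sizeOf φ

theorem interpAgree (π : Program) (P : Set PVar) (hP : ↑(varsP π) ⊆ P)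
    {M M' : Model} (hMM' : Interp π M M') (N : Model) (h : Agree P M N) :
    Interp π N (paste M' N P) := by
  match π with
  | .assignT p =>
    have hp : p ∈ P := hP (by simp [varsP])
    simp only [Interp] at hMM' ⊢
    obtain ⟨e1, e2, e3, hw⟩ := hMM'
    refine ⟨?_, ?_, ?_, ((h p hp).2.1).mp hw⟩
    · ext x; simp only [paste_R, e1]
      by_cases hx : x ∈ P
      · have := (h x hx).1; tauto
      · tauto
    · ext x; simp only [paste_W, e2]
      by_cases hx : x ∈ P
      · have := (h x hx).2.1; tauto
      · tauto
    · ext x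
      simp only [paste_V, e3, Set.mem_union, Set.mem_singleton_iff]
      have hxp : x = p → x ∈ P := fun e => e ▸ hp
      by_cases hx : x ∈ P
      · have := (h x hx).2.2; tauto
      · tauto
  | .assignF p =>
    have hp : p ∈ P := hP (by simp [varsP])
    simp only [Interp] at hMM' ⊢
    obtain ⟨e1, e2, e3, hw⟩ := hMM'
    refine ⟨?_, ?_, ?_, ((h p hp).2.1).mp hw⟩
    · ext x; simp only [paste_R, e1]
      by_cases hx : x ∈ P
      · have := (h x hx).1; tauto
      · tauto
    · ext x; simp only [paste_W, e2]
      by_cases hx : x ∈ P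
      · have := (h x hx).2.1; tauto
      · tauto
    · ext x
      simp only [paste_V, e3, Set.mem_diff, Set.mem_singleton_iff]
      have hxp : x = p → x ∈ P := fun e => e ▸ hp
      by_cases hx : x ∈ P
      · have := (h x hx).2.2; tauto
      · tauto
  | .addR p =>
    have hp : p ∈ P := hP (by simp [varsP])
    simp only [Interp] at hMM' ⊢
    obtain ⟨e1, e2, e3⟩ := hMM'
    refine ⟨?_, ?_, ?_⟩
    · ext x
      simp only [paste_R, e1, Set.mem_union, Set.mem_singleton_iff]
      have hxp : x = p → x ∈ P := fun e => e ▸ hp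
      by_cases hx : x ∈ P
      · have := (h x hx).1; tauto
      · tauto
    · ext x; simp only [paste_W, e2]
      by_cases hx : x ∈ P
      · have := (h x hx).2.1; tauto
      · tauto
    · ext x; simp only [paste_V, e3]
      by_cases hx : x ∈ P
      · have := (h x hx).2.2; tauto
      · tauto
  | .remR p =>
    have hp : p ∈ P := hP (by simp [varsP])
    simp only [Interp] at hMM' ⊢
    obtain ⟨e1, e2, e3⟩ := hMM'
    refine ⟨?_, ?_, ?_⟩
    · ext x
      simp only [paste_R, e1, Set.mem_diff, Set.mem_singleton_iff]
      have hxp : x = p → x ∈ P := fun e => e ▸ hp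
      by_cases hx : x ∈ P
      · have := (h x hx).1; tauto
      · tauto
    · ext x
      simp only [paste_W, e2, Set.mem_diff, Set.mem_singleton_iff]
      have hxp : x = p → x ∈ P := fun e => e ▸ hp
      by_cases hx : x ∈ P
      · have := (h x hx).2.1; tauto
      · tauto
    · ext x; simp only [paste_V, e3]
      by_cases hx : x ∈ P
      · have := (h x hx).2.2; tauto
      · tauto
  | .addW p =>
    have hp : p ∈ P := hP (by simp [varsP])
    simp only [Interp] at hMM' ⊢
    obtain ⟨e1, e2, e3⟩ := hMM'
    refine ⟨?_, ?_, ?_⟩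
    · ext x
      simp only [paste_R, e1, Set.mem_union, Set.mem_singleton_iff]
      have hxp : x = p → x ∈ P := fun e => e ▸ hp
      by_cases hx : x ∈ P
      · have := (h x hx).1; tauto
      · tauto
    · ext x
      simp only [paste_W, e2, Set.mem_union, Set.mem_singleton_iff]
      have hxp : x = p → x ∈ P := fun e => e ▸ hp
      by_cases hx : x ∈ P
      · have := (h x hx).2.1; tauto
      · tauto
    · ext x; simp only [paste_V, e3]
      by_cases hx : x ∈ P
      · have := (h x hx).2.2; tauto
      · tauto
  | .remW p =>
    have hp : p ∈ P := hP (by simp [varsP])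
    simp only [Interp] at hMM' ⊢
    obtain ⟨e1, e2, e3⟩ := hMM'
    refine ⟨?_, ?_, ?_⟩
    · ext x; simp only [paste_R, e1]
      by_cases hx : x ∈ P
      · have := (h x hx).1; tauto
      · tauto
    · ext x
      simp only [paste_W, e2, Set.mem_diff, Set.mem_singleton_iff]
      have hxp : x = p → x ∈ P := fun e => e ▸ hp
      by_cases hx : x ∈ P
      · have := (h x hx).2.1; tauto
      · tauto
    · ext x; simp only [paste_V, e3]
      by_cases hx : x ∈ P
      · have := (h x hx).2.2; tauto
      · tauto
  | .testEx φ =>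
    have hP' : ↑(varsF φ) ⊆ P := by simpa [varsP] using hP
    simp only [Interp] at hMM'
    obtain ⟨heq, hs⟩ := hMM'
    subst heq
    rw [paste_self h]
    exact ⟨rfl, (satAgree φ P hP' M N h).mp hs⟩
  | .testEn φ =>
    have hP' : ↑(varsF φ) ⊆ P := by simpa [varsP] using hP
    simp only [Interp] at hMM'
    obtain ⟨heq, hall⟩ := hMM'
    subst heq
    rw [paste_self h]
    refine ⟨rfl, ?_⟩
    intro N'' hN''
    obtain ⟨eR, eW, eV⟩ := hN''
    have hM'' : ∃ K : Model, K.R = M.R ∧ K.W = M.W ∧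
        (∀ x, x ∈ K.V ↔ ((x ∈ P ∧ x ∈ N''.V) ∨ (x ∉ P ∧ x ∈ M.V))) :=
      ⟨⟨M.R, M.W, (N''.V ∩ P) ∪ (M.V \ P), M.sub⟩, rfl, rfl, by
        intro x
        simp only [Set.mem_union, Set.mem_inter_iff, Set.mem_diff]; tauto⟩
    obtain ⟨K, kR, kW, kV⟩ := hM''
    have hind : Indist K M := by
      refine ⟨kR, kW, ?_⟩
      ext x
      simp only [Set.mem_inter_iff, kR, kV]
      by_cases hx : x ∈ P
      · have hhx := h x hx
        have e1 := Set.ext_iff.mp eR x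
        have e2 := Set.ext_iff.mp eV x
        simp only [Set.mem_inter_iff] at e2
        tauto
      · tauto
    have hsatK : Sat K φ := hall K hind
    have hAg : Agree P K N'' := by
      intro x hx
      have hhx := h x hx
      have e1 := Set.ext_iff.mp eR x
      have e2 := Set.ext_iff.mp eW x
      have := kV x
      rw [kR, kW]
      tauto
    exact (satAgree φ P hP' K N'' hAg).mp hsatK
  | .seq π1 π2 =>
    have h1 : ↑(varsP π1) ⊆ P := by
      refine subset_trans ?_ hP; simp [varsP, Finset.coe_union]
    have h2 : ↑(varsP π2) ⊆ P := by
      refine subset_trans ?_ hP; simp [varsP, Finset.coe_union]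
    simp only [Interp] at hMM' ⊢
    obtain ⟨K, hK1, hK2⟩ := hMM'
    have i1 := interpAgree π1 P h1 hK1 N h
    have i2 := interpAgree π2 P h2 hK2 (paste K N P) (agree_paste K N)
    rw [paste_paste] at i2
    exact ⟨paste K N P, i1, i2⟩
  | .choice π1 π2 =>
    have h1 : ↑(varsP π1) ⊆ P := by
      refine subset_trans ?_ hP; simp [varsP, Finset.coe_union]
    have h2 : ↑(varsP π2) ⊆ P := by
      refine subset_trans ?_ hP; simp [varsP, Finset.coe_union]
    simp only [Interp] at hMM' ⊢
    rcases hMM' with hc | hc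
    · exact Or.inl (interpAgree π1 P h1 hc N h)
    · exact Or.inr (interpAgree π2 P h2 hc N h)
  | .star π =>
    have h1 : ↑(varsP π) ⊆ P := by simpa [varsP] using hP
    simp only [Interp] at hMM' ⊢
    have key : ∀ X Y : Model, Relation.ReflTransGen (fun A B => Interp π A B) X Y →
        ∀ Z : Model, Agree P X Z →
        Relation.ReflTransGen (fun A B => Interp π A B) Z (paste Y Z P) := by
      intro X Y hXY
      induction hXY with
      | refl =>
        intro Z hZ
        rw [paste_self hZ]
      | @tail b c _ hstep ih =>
        intro Z hZ
        have hh1 := ih Z hZ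
        have hh3 := interpAgree π P h1 hstep (paste b Z P) (agree_paste b Z)
        rw [paste_paste] at hh3
        exact hh1.tail hh3
    exact key M M' hMM' N h
  | .par π1 π2 =>
    have h1 : ↑(varsP π1) ⊆ P := by
      refine subset_trans ?_ hP; simp [varsP, Finset.coe_union]
    have h2 : ↑(varsP π2) ⊆ P := by
      refine subset_trans ?_ hP; simp [varsP, Finset.coe_union]
    simp only [Interp] at hMM' ⊢
    obtain ⟨M1, M2, M1', M2', hSplit, hMerge, hI1, hI2, f1R, f1W, f1V, f2R, f2W, f2V⟩ := hMM'
    obtain ⟨⟨d12, d21⟩, sR, sW, sV1, sV2⟩ := hSplit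
    obtain ⟨⟨d12', d21'⟩, mR, mW, mV, mVal⟩ := hMerge
    have d12x : ∀ x, ¬(x ∈ M1.W ∧ x ∈ M2.R) := fun x hx =>
      Set.eq_empty_iff_forall_notMem.mp d12 x ⟨hx.1, hx.2⟩
    have d21x : ∀ x, ¬(x ∈ M2.W ∧ x ∈ M1.R) := fun x hx =>
      Set.eq_empty_iff_forall_notMem.mp d21 x ⟨hx.1, hx.2⟩
    have d12x' : ∀ x, ¬(x ∈ M1'.W ∧ x ∈ M2'.R) := fun x hx =>
      Set.eq_empty_iff_forall_notMem.mp d12' x ⟨hx.1, hx.2⟩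
    have d21x' : ∀ x, ¬(x ∈ M2'.W ∧ x ∈ M1'.R) := fun x hx =>
      Set.eq_empty_iff_forall_notMem.mp d21' x ⟨hx.1, hx.2⟩
    have sRx : ∀ x, x ∈ M.R ↔ (x ∈ M1.R ∨ x ∈ M2.R) := fun x => by rw [sR]; simp
    have sWx : ∀ x, x ∈ M.W ↔ (x ∈ M1.W ∨ x ∈ M2.W) := fun x => by rw [sW]; simp
    have sV1x : ∀ x, (x ∈ M.V ↔ x ∈ M1.V) := fun x => Set.ext_iff.mp sV1 x
    have sV2x : ∀ x, (x ∈ M.V ↔ x ∈ M2.V) := fun x => Set.ext_iff.mp sV2 x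
    have mRx : ∀ x, x ∈ M'.R ↔ (x ∈ M1'.R ∨ x ∈ M2'.R) := fun x => by rw [mR]; simp
    have mWx : ∀ x, x ∈ M'.W ↔ (x ∈ M1'.W ∨ x ∈ M2'.W) := fun x => by rw [mW]; simp
    have mVx : ∀ x, ((x ∈ M1'.V ∧ x ∉ M'.W) ↔ (x ∈ M2'.V ∧ x ∉ M'.W)) := fun x => by
      have := Set.ext_iff.mp mV x; simpa [Set.mem_diff] using this
    have mValx : ∀ x, x ∈ M'.V ↔
        ((x ∈ M1'.V ∧ x ∈ M1'.W) ∨ (x ∈ M2'.V ∧ x ∈ M2'.W) ∨ (x ∈ M1'.V ∧ x ∈ M2'.V)) :=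
      fun x => by rw [mVal]; simp [Set.mem_union, Set.mem_inter_iff]; tauto
    have f1Rx : ∀ x, (x ∈ M1.R ↔ x ∈ M1'.R) := fun x => Set.ext_iff.mp f1R x
    have f1Wx : ∀ x, (x ∈ M1.W ↔ x ∈ M1'.W) := fun x => Set.ext_iff.mp f1W x
    have f1Vx : ∀ x, ((x ∈ M1.V ∧ x ∉ M1.W) ↔ (x ∈ M1'.V ∧ x ∉ M1'.W)) := fun x => by
      have := Set.ext_iff.mp f1V x; simpa [Set.mem_diff] using this
    have f2Rx : ∀ x, (x ∈ M2.R ↔ x ∈ M2'.R) := fun x => Set.ext_iff.mp f2R x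
    have f2Wx : ∀ x, (x ∈ M2.W ↔ x ∈ M2'.W) := fun x => Set.ext_iff.mp f2W x
    have f2Vx : ∀ x, ((x ∈ M2.V ∧ x ∉ M2.W) ↔ (x ∈ M2'.V ∧ x ∉ M2'.W)) := fun x => by
      have := Set.ext_iff.mp f2V x; simpa [Set.mem_diff] using this
    obtain ⟨N1, n1R, n1W, n1V⟩ : ∃ N1 : Model,
        (∀ x, x ∈ N1.R ↔ ((x ∈ M1.R ∧ x ∈ P) ∨ (x ∈ N.R ∧ x ∉ P))) ∧
        (∀ x, x ∈ N1.W ↔ ((x ∈ M1.W ∧ x ∈ P) ∨ (x ∈ N.W ∧ x ∉ P))) ∧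
        (∀ x, x ∈ N1.V ↔ x ∈ N.V) := by
      refine ⟨⟨(M1.R ∩ P) ∪ (N.R \ P), (M1.W ∩ P) ∪ (N.W \ P), N.V, ?_⟩, ?_, ?_, ?_⟩
      · intro x hx
        simp only [Set.mem_union, Set.mem_inter_iff, Set.mem_diff] at hx ⊢
        rcases hx with ⟨a, b⟩ | ⟨a, b⟩
        · exact Or.inl ⟨M1.sub a, b⟩
        · exact Or.inr ⟨N.sub a, b⟩
      all_goals intro x; simp [Set.mem_union, Set.mem_inter_iff, Set.mem_diff]
    obtain ⟨N2, n2R, n2W, n2V⟩ : ∃ N2 : Model,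
        (∀ x, x ∈ N2.R ↔ (x ∈ M2.R ∧ x ∈ P)) ∧
        (∀ x, x ∈ N2.W ↔ (x ∈ M2.W ∧ x ∈ P)) ∧
        (∀ x, x ∈ N2.V ↔ x ∈ N.V) := by
      refine ⟨⟨M2.R ∩ P, M2.W ∩ P, N.V, Set.inter_subset_inter_left P M2.sub⟩, ?_, ?_, ?_⟩
      all_goals intro x; simp [Set.mem_inter_iff]
    have hA1 : Agree P M1 N1 := by
      intro x hx
      have hhx := h x hx
      have := sV1x x
      refine ⟨?_, ?_, ?_⟩ <;> simp only [n1R x, n1W x, n1V x] <;> tauto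
    have hA2 : Agree P M2 N2 := by
      intro x hx
      have hhx := h x hx
      have := sV2x x
      refine ⟨?_, ?_, ?_⟩ <;> simp only [n2R x, n2W x, n2V x] <;> tauto
    have i1 := interpAgree π1 P h1 hI1 N1 hA1
    have i2 := interpAgree π2 P h2 hI2 N2 hA2
    refine ⟨N1, N2, paste M1' N1 P, paste M2' N2 P, ⟨⟨?_, ?_⟩, ?_, ?_, ?_, ?_⟩,
      ⟨⟨?_, ?_⟩, ?_, ?_, ?_, ?_⟩, i1, i2, ?_, ?_, ?_, ?_, ?_, ?_⟩
    -- SplitRel N N1 N2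
    · ext x
      simp only [Set.mem_inter_iff, Set.mem_empty_iff_false, iff_false, n1W, n2R]
      have := d12x x
      tauto
    · ext x
      simp only [Set.mem_inter_iff, Set.mem_empty_iff_false, iff_false, n2W, n1R]
      have := d21x x
      tauto
    · ext x
      simp only [Set.mem_union, n1R, n2R]
      by_cases hx : x ∈ P
      · have hhx := h x hx
        have := sRx x
        tauto
      · tauto
    · ext x
      simp only [Set.mem_union, n1W, n2W]
      by_cases hx : x ∈ P
      · have hhx := h x hx
        have := sWx x
        tauto
      · tauto
    · ext x; exact (n1V x).symm
    · ext x; exact (n2V x).symm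
    -- MergeRel (paste M' N P) (paste M1' N1 P) (paste M2' N2 P)
    · ext x
      simp only [Set.mem_inter_iff, Set.mem_empty_iff_false, iff_false, paste_W, paste_R,
        n1W, n2R]
      have := d12x' x
      tauto
    · ext x
      simp only [Set.mem_inter_iff, Set.mem_empty_iff_false, iff_false, paste_W, paste_R,
        n2W, n1R]
      have := d21x' x
      tauto
    · ext x
      simp only [Set.mem_union, paste_R, n1R, n2R]
      by_cases hx : x ∈ P
      · have := mRx x; tauto
      · tauto
    · ext x
      simp only [Set.mem_union, paste_W, n1W, n2W]
      by_cases hx : x ∈ P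
      · have := mWx x; tauto
      · tauto
    · ext x
      simp only [Set.mem_diff, paste_V, paste_W, n1V, n2V]
      by_cases hx : x ∈ P
      · have := mVx x; tauto
      · tauto
    · ext x
      simp only [Set.mem_union, Set.mem_inter_iff, paste_V, paste_W, n1V, n2V, n1W, n2W]
      by_cases hx : x ∈ P
      · have := mValx x; tauto
      · tauto
    -- frame conditions
    · ext x
      simp only [paste_R, n1R]
      by_cases hx : x ∈ P
      · have := f1Rx x; tauto
      · tauto
    · ext x
      simp only [paste_W, n1W]
      by_cases hx : x ∈ P
      · have := f1Wx x; tauto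
      · tauto
    · ext x
      simp only [Set.mem_diff, paste_V, paste_W, n1V, n1W]
      by_cases hx : x ∈ P
      · have hhx := h x hx
        have := f1Vx x
        have := sV1x x
        tauto
      · tauto
    · ext x
      simp only [paste_R, n2R]
      by_cases hx : x ∈ P
      · have := f2Rx x; tauto
      · tauto
    · ext x
      simp only [paste_W, n2W]
      by_cases hx : x ∈ P
      · have := f2Wx x; tauto
      · tauto
    · ext x
      simp only [Set.mem_diff, paste_V, paste_W, n2V, n2W]
      by_cases hx : x ∈ P
      · have hhx := h x hx
        have := f2Vx x
        have := sV2x x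
        tauto
      · tauto
termination_by sizeOf π
end

/-! ### Characterizations of readability and writability formulas -/

theorem sat_atom (M : Model) (p : PVar) : Sat M (.atom p) ↔ p ∈ M.V := by simp [Sat]

theorem sat_wF (M : Model) (p : PVar) : Sat M (wF p) ↔ p ∈ M.W := by
  simp only [wF, Sat]
  constructor
  · rintro ⟨M', ⟨-, -, -, hw⟩, -⟩; exact hw
  · intro hp
    exact ⟨⟨M.R, M.W, M.V ∪ {p}, M.sub⟩, ⟨rfl, rfl, rfl, hp⟩, trivial⟩

theorem sat_rF (M : Model) (p : PVar) : Sat M (rF p) ↔ p ∈ M.R := by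
  simp only [rF, Sat, Interp]
  constructor
  · rintro (⟨M', ⟨heq, hall⟩, -⟩ | ⟨M', ⟨heq, hall⟩, -⟩) <;> by_contra hR
    · have hind : Indist ⟨M.R, M.W, M.V \ {p}, M.sub⟩ M := by
        refine ⟨rfl, rfl, ?_⟩
        ext x
        simp only [Set.mem_inter_iff, Set.mem_diff, Set.mem_singleton_iff]
        constructor
        · rintro ⟨⟨h1, -⟩, h2⟩; exact ⟨h1, h2⟩
        · rintro ⟨h1, h2⟩
          exact ⟨⟨h1, fun e => hR (e ▸ h2)⟩, h2⟩
      have := hall _ hind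
      simp [Sat] at this
    · have hind : Indist ⟨M.R, M.W, M.V ∪ {p}, M.sub⟩ M := by
        refine ⟨rfl, rfl, ?_⟩
        ext x
        simp only [Set.mem_inter_iff, Set.mem_union, Set.mem_singleton_iff]
        constructor
        · rintro ⟨h1 | h1, h2⟩
          · exact ⟨h1, h2⟩
          · exact absurd (h1 ▸ h2) hR
        · rintro ⟨h1, h2⟩; exact ⟨Or.inl h1, h2⟩
      have := hall _ hind
      simp [Sat] at this
  · intro hp
    by_cases hv : p ∈ M.V
    · refine Or.inl ⟨M, ⟨rfl, ?_⟩, trivial⟩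
      intro M'' ⟨eR, eW, eV⟩
      have : p ∈ M''.V ∩ M''.R := by rw [eV]; exact ⟨hv, hp⟩
      exact (sat_atom M'' p).mpr this.1
    · refine Or.inr ⟨M, ⟨rfl, ?_⟩, trivial⟩
      intro M'' ⟨eR, eW, eV⟩
      show ¬ Sat M'' (.atom p)
      rw [sat_atom]
      intro hvp
      have : p ∈ M''.V ∩ M''.R := ⟨hvp, eR ▸ hp⟩
      rw [eV] at this
      exact hv this.1

/-! ### Conjunctions and disjunctions of lists -/

theorem sat_andF (M : Model) (φ ψ : Formula) : Sat M (andF φ ψ) ↔ (Sat M φ ∧ Sat M ψ) := by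
  simp only [andF, Sat]; tauto

theorem isBool_andF {φ ψ : Formula} (h1 : IsBool φ) (h2 : IsBool ψ) : IsBool (andF φ ψ) :=
  IsBool.neg _ (IsBool.or _ _ (IsBool.neg _ h1) (IsBool.neg _ h2))

def conjList : List Formula → Formula
  | [] => Formula.top
  | χ :: l => andF χ (conjList l)

def disjList : List Formula → Formula
  | [] => botF
  | χ :: l => Formula.or χ (disjList l)

theorem sat_conjList (M : Model) (l : List Formula) :
    Sat M (conjList l) ↔ ∀ χ ∈ l, Sat M χ := by
  induction l with
  | nil => simp [conjList, Sat]
  | cons χ l ih => simp [conjList, sat_andF, ih]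

theorem sat_disjList (M : Model) (l : List Formula) :
    Sat M (disjList l) ↔ ∃ χ ∈ l, Sat M χ := by
  induction l with
  | nil => simp [disjList, botF, Sat]
  | cons χ l ih => simp [disjList, Sat, ih]

theorem isBool_conjList {l : List Formula} (h : ∀ χ ∈ l, IsBool χ) : IsBool (conjList l) := by
  induction l with
  | nil => exact IsBool.top
  | cons χ l ih =>
    exact isBool_andF (h χ (by simp)) (ih fun χ' h' => h χ' (by simp [h']))

theorem isBool_disjList {l : List Formula} (h : ∀ χ ∈ l, IsBool χ) : IsBool (disjList l) := by
  induction l with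
  | nil => exact IsBool.neg _ IsBool.top
  | cons χ l ih =>
    exact IsBool.or _ _ (h χ (by simp)) (ih fun χ' h' => h χ' (by simp [h']))

/-! ### Descriptions of restricted models -/

noncomputable def descr (P : Finset PVar) (T : Finset PVar × Finset PVar × Finset PVar) : Formula :=
  conjList (P.toList.map fun p =>
    andF (if p ∈ T.1 then rF p else .neg (rF p))
      (andF (if p ∈ T.2.1 then wF p else .neg (wF p))
            (if p ∈ T.2.2 then .atom p else .neg (.atom p))))

theorem sat_ite {M : Model} {χ : Formula} (b : Prop) [Decidable b] {c : Prop}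
    (h : Sat M χ ↔ c) : Sat M (if b then χ else Formula.neg χ) ↔ (c ↔ b) := by
  by_cases hb : b <;> simp [hb, Sat, h]

theorem isBool_descr (P : Finset PVar) (T : Finset PVar × Finset PVar × Finset PVar) :
    IsBool (descr P T) := by
  apply isBool_conjList
  intro χ hχ
  simp only [List.mem_map] at hχ
  obtain ⟨p, -, rfl⟩ := hχ
  have hr : IsBool (rF p) := IsBool.readable p
  have hw : IsBool (wF p) := IsBool.writable p
  refine isBool_andF ?_ (isBool_andF ?_ ?_) <;> split <;>
    first
      | exact hr | exact IsBool.neg _ hr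
      | exact hw | exact IsBool.neg _ hw
      | exact IsBool.atom p | exact IsBool.neg _ (IsBool.atom p)

theorem sat_descr (M : Model) (P : Finset PVar) (T : Finset PVar × Finset PVar × Finset PVar) :
    Sat M (descr P T) ↔
      ∀ p ∈ P, ((p ∈ M.R ↔ p ∈ T.1) ∧ (p ∈ M.W ↔ p ∈ T.2.1) ∧ (p ∈ M.V ↔ p ∈ T.2.2)) := by
  rw [descr, sat_conjList]
  constructor
  · intro hall p hp
    have := hall _ (List.mem_map_of_mem (Finset.mem_toList.mpr hp))
    rw [sat_andF, sat_andF, sat_ite _ (sat_rF M p), sat_ite _ (sat_wF M p),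
      sat_ite _ (sat_atom M p)] at this
    tauto
  · intro hall χ hχ
    obtain ⟨p, hp, rfl⟩ := List.mem_map.mp hχ
    have := hall p (Finset.mem_toList.mp hp)
    rw [sat_andF, sat_andF, sat_ite _ (sat_rF M p), sat_ite _ (sat_wF M p),
      sat_ite _ (sat_atom M p)]
    tauto

/-- Reduction to Boolean form: every DL-PA∥ formula is equivalent
(true in exactly the same models) to a Boolean combination of propositional
variables, writability statements and readability statements. -/
theorem reduction_to_boolean (φ : Formula) :
    ∃ ψ : Formula, IsBool ψ ∧ ∀ M : Model, Sat M φ ↔ Sat M ψ := by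
  classical
  set P := varsF φ with hPdef
  have hP : (↑(varsF φ) : Set PVar) ⊆ ↑P := subset_of_eq (by rw [hPdef])
  let canon : Finset PVar × Finset PVar × Finset PVar → Model :=
    fun T => ⟨(↑T.1 : Set PVar) ∪ ↑T.2.1, ↑T.2.1, ↑T.2.2, Set.subset_union_right⟩
  let Good : Finset (Finset PVar × Finset PVar × Finset PVar) :=
    (P.powerset ×ˢ P.powerset ×ˢ P.powerset).filter (fun T => Sat (canon T) φ)
  refine ⟨disjList (Good.toList.map (descr P)), ?_, ?_⟩
  · apply isBool_disjList
    intro χ hχ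
    obtain ⟨T, -, rfl⟩ := List.mem_map.mp hχ
    exact isBool_descr P T
  · intro M
    rw [sat_disjList]
    constructor
    · intro hM
      set T : Finset PVar × Finset PVar × Finset PVar :=
        (P.filter (· ∈ M.R), P.filter (· ∈ M.W), P.filter (· ∈ M.V)) with hTdef
      have hAg : Agree ↑P M (canon T) := by
        intro x hx
        have hx' : x ∈ P := hx
        have hsub : x ∈ M.W → x ∈ M.R := fun h => M.sub h
        simp only [canon, hTdef, Set.mem_union, Finset.coe_filter, Set.mem_setOf_eq,
          Finset.mem_coe, Finset.mem_filter]
        refine ⟨?_, ?_, ?_⟩ <;> tauto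
      have hsatC : Sat (canon T) φ := (satAgree φ ↑P hP M (canon T) hAg).mp hM
      have hTmem : T ∈ Good := by
        simp only [Good, Finset.mem_filter, Finset.mem_product]
        exact ⟨⟨Finset.mem_powerset.mpr (Finset.filter_subset _ _),
          Finset.mem_powerset.mpr (Finset.filter_subset _ _),
          Finset.mem_powerset.mpr (Finset.filter_subset _ _)⟩, hsatC⟩
      refine ⟨descr P T, List.mem_map_of_mem (Finset.mem_toList.mpr hTmem), ?_⟩
      rw [sat_descr]
      intro p hp
      simp only [hTdef, Finset.mem_filter]
      tauto
    · rintro ⟨χ, hχ, hsat⟩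
      obtain ⟨T, hT, rfl⟩ := List.mem_map.mp hχ
      have hTmem : T ∈ Good := Finset.mem_toList.mp hT
      simp only [Good, Finset.mem_filter] at hTmem
      obtain ⟨-, hsatC⟩ := hTmem
      rw [sat_descr] at hsat
      have hAg : Agree ↑P M (canon T) := by
        intro x hx
        have hx' : x ∈ P := hx
        have := hsat x hx'
        have hsub : x ∈ M.W → x ∈ M.R := fun h => M.sub h
        simp only [canon, Set.mem_union, Finset.mem_coe]
        refine ⟨?_, ?_, ?_⟩ <;> tauto
      exact (satAgree φ ↑P hP M (canon T) hAg).mpr hsatC
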